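/- arXiv:1010.6119 — 6 statements merged into one kernel-verified Lean document; each statement's English description precedes it below -/
import Mathlib

section
/- For n ≥ 1 and each nonnegative integer i, the number of compositions of n into odd parts having exactly n - 2i parts equals the binomial coefficient C(n-1-i, i). Equivalently, Σ_{γ ∈ F_n} q^{(n-k(γ))/2} = Σ_{i≥0} C(n-1-i, i) q^i. -/
open Finset

/-- Make a composition from a list, with a junk default. -/
private def mkComp (n : ℕ) (l : List ℕ) : Composition n :=
  if h : (∀ x ∈ l, 0 < x) ∧ l.sum = n then
    ⟨l, fun hx => h.1 _ hx, h.2⟩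
  else Composition.ones n

private lemma mkComp_blocks (n : ℕ) (l : List ℕ) (h1 : ∀ x ∈ l, 0 < x)
    (h2 : l.sum = n) : (mkComp n l).blocks = l := by
  rw [mkComp, dif_pos ⟨h1, h2⟩]

private lemma comp_ext {n : ℕ} {c d : Composition n} (h : c.blocks = d.blocks) : c = d := by
  cases c; cases d; simpa using h

/-- The counting function. -/
private def fOdd (n k : ℕ) : ℕ :=
  (Finset.univ.filter (fun c : Composition n =>
      (∀ x ∈ c.blocks, Odd x) ∧ c.length = k)).card

private lemma fOdd_zero_right (n : ℕ) (hn : 1 ≤ n) : fOdd n 0 = 0 := by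
  unfold fOdd
  rw [Finset.card_eq_zero, Finset.filter_eq_empty_iff]
  rintro c - ⟨-, hlen⟩
  have hb : c.blocks = [] := List.length_eq_zero_iff.mp hlen
  have hs := c.blocks_sum
  rw [hb] at hs
  simp at hs
  omega

private lemma fOdd_zero_of_lt (n k : ℕ) (h : n < k) : fOdd n k = 0 := by
  unfold fOdd
  rw [Finset.card_eq_zero, Finset.filter_eq_empty_iff]
  rintro c - ⟨-, hlen⟩
  have := c.length_le
  omega

private lemma fOdd_zero_zero : fOdd 0 0 = 1 := by
  unfold fOdd
  rw [Finset.filter_true_of_mem, Finset.card_univ, composition_card]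
  · norm_num
  · intro c _
    have hb : c.blocks = [] := by
      cases hb : c.blocks with
      | nil => rfl
      | cons a t =>
        have hs := c.blocks_sum
        have ha : 0 < a := c.blocks_pos (by rw [hb]; exact List.mem_cons_self)
        rw [hb] at hs
        simp [List.sum_cons] at hs
        omega
    constructor
    · intro x hx; rw [hb] at hx; simp at hx
    · simp [Composition.length, hb]

private lemma fOdd_rec (n k : ℕ) :
    fOdd (n + 1) (k + 1) = fOdd n k + fOdd (n - 1) (k + 1) := by
  classical
  unfold fOdd
  rw [← Finset.card_filter_add_card_filter_not
    (p := fun c : Composition (n + 1) => c.blocks.headI = 1)]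
  congr 1
  · -- head = 1 part
    refine Finset.card_bij'
      (fun c _ => mkComp n c.blocks.tail)
      (fun d _ => mkComp (n + 1) (1 :: d.blocks)) ?_ ?_ ?_ ?_
    · rintro c hc
      simp only [Finset.mem_filter, Finset.mem_univ, true_and] at hc ⊢
      obtain ⟨⟨hodd, hlen⟩, hhead⟩ := hc
      cases hb : c.blocks with
      | nil => rw [Composition.length, hb] at hlen; simp at hlen
      | cons a t =>
        have ha : a = 1 := by rw [hb] at hhead; simpa using hhead
        have hs := c.blocks_sum
        rw [hb, List.sum_cons, ha] at hs
        have hpos : ∀ x ∈ t, 0 < x := fun x hx =>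
          c.blocks_pos (by rw [hb]; exact List.mem_cons_of_mem _ hx)
        have hts : t.sum = n := by omega
        simp only [List.tail_cons]
        rw [mkComp_blocks n t hpos hts]
        constructor
        · intro x hx; exact hodd x (by rw [hb]; exact List.mem_cons_of_mem _ hx)
        · rw [Composition.length, hb] at hlen
          rw [Composition.length, mkComp_blocks n t hpos hts]
          simpa using hlen
    · rintro d hd
      simp only [Finset.mem_filter, Finset.mem_univ, true_and] at hd ⊢
      obtain ⟨hodd, hlen⟩ := hd
      have hpos : ∀ x ∈ (1 :: d.blocks), 0 < x := by
        intro x hx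
        rcases List.mem_cons.mp hx with h | h
        · omega
        · exact d.blocks_pos h
      have hs : (1 :: d.blocks).sum = n + 1 := by
        rw [List.sum_cons, d.blocks_sum]; omega
      rw [mkComp_blocks _ _ hpos hs]
      refine ⟨⟨?_, ?_⟩, ?_⟩
      · intro x hx
        rcases List.mem_cons.mp hx with h | h
        · rw [h]; exact odd_one
        · exact hodd x h
      · rw [Composition.length, mkComp_blocks _ _ hpos hs]
        simp [Composition.length] at hlen
        simp [hlen]
      · rfl
    · rintro c hc
      simp only [Finset.mem_filter, Finset.mem_univ, true_and] at hc
      obtain ⟨⟨hodd, hlen⟩, hhead⟩ := hc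
      beta_reduce
      apply comp_ext
      cases hb : c.blocks with
      | nil => rw [Composition.length, hb] at hlen; simp at hlen
      | cons a t =>
        have ha : a = 1 := by rw [hb] at hhead; simpa using hhead
        have hs := c.blocks_sum
        rw [hb, List.sum_cons, ha] at hs
        have hpos : ∀ x ∈ t, 0 < x := fun x hx =>
          c.blocks_pos (by rw [hb]; exact List.mem_cons_of_mem _ hx)
        have hts : t.sum = n := by omega
        simp only [List.tail_cons]
        rw [mkComp_blocks n t hpos hts]
        have hpos' : ∀ x ∈ (1 :: t), 0 < x := by
          intro x hx
          rcases List.mem_cons.mp hx with h | h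
          · omega
          · exact hpos x h
        rw [mkComp_blocks (n + 1) (1 :: t) hpos' (by simp [hts]; omega)]
        rw [ha]
    · rintro d hd
      simp only [Finset.mem_filter, Finset.mem_univ, true_and] at hd
      obtain ⟨hodd, hlen⟩ := hd
      beta_reduce
      apply comp_ext
      have hpos : ∀ x ∈ (1 :: d.blocks), 0 < x := by
        intro x hx
        rcases List.mem_cons.mp hx with h | h
        · omega
        · exact d.blocks_pos h
      have hs : (1 :: d.blocks).sum = n + 1 := by
        rw [List.sum_cons, d.blocks_sum]; omega
      have h1 : (mkComp (n + 1) (1 :: d.blocks)).blocks.tail = d.blocks := by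
        rw [mkComp_blocks _ _ hpos hs]; rfl
      rw [h1, mkComp_blocks n d.blocks (fun x hx => d.blocks_pos hx) d.blocks_sum]
  · -- head ≠ 1 part
    refine Finset.card_bij'
      (fun c _ => mkComp (n - 1) ((c.blocks.headI - 2) :: c.blocks.tail))
      (fun d _ => mkComp (n + 1) ((d.blocks.headI + 2) :: d.blocks.tail)) ?_ ?_ ?_ ?_
    · rintro c hc
      simp only [Finset.mem_filter, Finset.mem_univ, true_and] at hc ⊢
      obtain ⟨⟨hodd, hlen⟩, hhead⟩ := hc
      cases hb : c.blocks with
      | nil => rw [Composition.length, hb] at hlen; simp at hlen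
      | cons a t =>
        have haodd : Odd a := hodd a (by rw [hb]; exact List.mem_cons_self)
        have ha1 : a ≠ 1 := by rw [hb] at hhead; simpa using hhead
        have hapos : 0 < a := c.blocks_pos (by rw [hb]; exact List.mem_cons_self)
        have ha3 : 3 ≤ a := by
          rcases haodd with ⟨m, hm⟩; omega
        have hs := c.blocks_sum
        rw [hb, List.sum_cons] at hs
        have hpos : ∀ x ∈ t, 0 < x := fun x hx =>
          c.blocks_pos (by rw [hb]; exact List.mem_cons_of_mem _ hx)
        have hpos' : ∀ x ∈ ((a - 2) :: t), 0 < x := by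
          intro x hx
          rcases List.mem_cons.mp hx with h | h
          · omega
          · exact hpos x h
        have hs' : ((a - 2) :: t).sum = n - 1 := by
          rw [List.sum_cons]; omega
        simp only [List.headI_cons, List.tail_cons]
        rw [mkComp_blocks _ _ hpos' hs']
        constructor
        · intro x hx
          rcases List.mem_cons.mp hx with h | h
          · rcases haodd with ⟨m, hm⟩
            rw [h]
            exact ⟨m - 1, by omega⟩
          · exact hodd x (by rw [hb]; exact List.mem_cons_of_mem _ h)
        · rw [Composition.length, hb] at hlen
          rw [Composition.length, mkComp_blocks _ _ hpos' hs']
          simpa using hlen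
    · rintro d hd
      simp only [Finset.mem_filter, Finset.mem_univ, true_and] at hd ⊢
      obtain ⟨hodd, hlen⟩ := hd
      cases hb : d.blocks with
      | nil => rw [Composition.length, hb] at hlen; simp at hlen
      | cons a t =>
        have hapos : 0 < a := d.blocks_pos (by rw [hb]; exact List.mem_cons_self)
        have hs := d.blocks_sum
        rw [hb, List.sum_cons] at hs
        have hpos : ∀ x ∈ t, 0 < x := fun x hx =>
          d.blocks_pos (by rw [hb]; exact List.mem_cons_of_mem _ hx)
        have hpos' : ∀ x ∈ ((a + 2) :: t), 0 < x := by
          intro x hx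
          rcases List.mem_cons.mp hx with h | h
          · omega
          · exact hpos x h
        have hs' : ((a + 2) :: t).sum = n + 1 := by
          rw [List.sum_cons]; omega
        simp only [List.headI_cons, List.tail_cons]
        rw [mkComp_blocks _ _ hpos' hs']
        refine ⟨⟨?_, ?_⟩, ?_⟩
        · intro x hx
          rcases List.mem_cons.mp hx with h | h
          · have : Odd a := hodd a (by rw [hb]; exact List.mem_cons_self)
            rcases this with ⟨m, hm⟩
            rw [h]
            exact ⟨m + 1, by omega⟩
          · exact hodd x (by rw [hb]; exact List.mem_cons_of_mem _ h)
        · rw [Composition.length, hb] at hlen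
          rw [Composition.length, mkComp_blocks _ _ hpos' hs']
          simpa using hlen
        · simp
    · rintro c hc
      simp only [Finset.mem_filter, Finset.mem_univ, true_and] at hc
      obtain ⟨⟨hodd, hlen⟩, hhead⟩ := hc
      beta_reduce
      apply comp_ext
      cases hb : c.blocks with
      | nil => rw [Composition.length, hb] at hlen; simp at hlen
      | cons a t =>
        have haodd : Odd a := hodd a (by rw [hb]; exact List.mem_cons_self)
        have ha1 : a ≠ 1 := by rw [hb] at hhead; simpa using hhead
        have hapos : 0 < a := c.blocks_pos (by rw [hb]; exact List.mem_cons_self)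
        have ha3 : 3 ≤ a := by rcases haodd with ⟨m, hm⟩; omega
        have hs := c.blocks_sum
        rw [hb, List.sum_cons] at hs
        have hpos : ∀ x ∈ t, 0 < x := fun x hx =>
          c.blocks_pos (by rw [hb]; exact List.mem_cons_of_mem _ hx)
        have hpos' : ∀ x ∈ ((a - 2) :: t), 0 < x := by
          intro x hx
          rcases List.mem_cons.mp hx with h | h
          · omega
          · exact hpos x h
        have hs' : ((a - 2) :: t).sum = n - 1 := by rw [List.sum_cons]; omega
        simp only [List.headI_cons, List.tail_cons]
        rw [mkComp_blocks _ _ hpos' hs']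
        simp only [List.headI_cons, List.tail_cons]
        have hpos'' : ∀ x ∈ ((a - 2 + 2) :: t), 0 < x := by
          intro x hx
          rcases List.mem_cons.mp hx with h | h
          · omega
          · exact hpos x h
        rw [mkComp_blocks _ _ hpos'' (by rw [List.sum_cons]; omega)]
        congr 1
        omega
    · rintro d hd
      simp only [Finset.mem_filter, Finset.mem_univ, true_and] at hd
      obtain ⟨hodd, hlen⟩ := hd
      beta_reduce
      apply comp_ext
      cases hb : d.blocks with
      | nil => rw [Composition.length, hb] at hlen; simp at hlen
      | cons a t =>
        have hapos : 0 < a := d.blocks_pos (by rw [hb]; exact List.mem_cons_self)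
        have hs := d.blocks_sum
        rw [hb, List.sum_cons] at hs
        have hpos : ∀ x ∈ t, 0 < x := fun x hx =>
          d.blocks_pos (by rw [hb]; exact List.mem_cons_of_mem _ hx)
        have hpos' : ∀ x ∈ ((a + 2) :: t), 0 < x := by
          intro x hx
          rcases List.mem_cons.mp hx with h | h
          · omega
          · exact hpos x h
        have hs' : ((a + 2) :: t).sum = n + 1 := by rw [List.sum_cons]; omega
        simp only [List.headI_cons, List.tail_cons]
        rw [mkComp_blocks _ _ hpos' hs']
        simp only [List.headI_cons, List.tail_cons]
        have h22 : a + 2 - 2 = a := by omega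
        rw [h22]
        have hpos'' : ∀ x ∈ (a :: t), 0 < x := by
          intro x hx
          rcases List.mem_cons.mp hx with h | h
          · omega
          · exact hpos x h
        rw [mkComp_blocks _ _ hpos'' (by rw [List.sum_cons]; omega)]

private lemma fOdd_key : ∀ k i : ℕ, fOdd (k + 2 * i) k = (k + 2 * i - 1 - i).choose i := by
  intro k
  induction k with
  | zero =>
    intro i
    cases i with
    | zero => simpa using fOdd_zero_zero
    | succ j =>
      rw [fOdd_zero_right _ (by omega)]
      have h1 : 0 + 2 * (j + 1) - 1 - (j + 1) = j := by omega
      rw [h1, Nat.choose_eq_zero_of_lt (by omega)]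
  | succ k IHk =>
    intro i
    induction i with
    | zero =>
      have h1 : (k + 1) + 2 * 0 = k + 1 := by ring
      rw [h1, fOdd_rec k k, fOdd_zero_of_lt (k - 1) (k + 1) (by omega)]
      have h2 := IHk 0
      simp only [Nat.mul_zero, Nat.add_zero, Nat.choose_zero_right] at h2 ⊢
      omega
    | succ j IHj =>
      have h1 : (k + 1) + 2 * (j + 1) = (k + 2 * (j + 1)) + 1 := by ring
      rw [h1, fOdd_rec (k + 2 * (j + 1)) k]
      have h2 : k + 2 * (j + 1) - 1 = (k + 1) + 2 * j := by omega
      rw [h2, IHj, IHk (j + 1)]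
      have h3 : k + 2 * (j + 1) - 1 - (j + 1) = k + j := by omega
      have h4 : (k + 1) + 2 * j - 1 - j = k + j := by omega
      have h5 : k + 2 * (j + 1) + 1 - 1 - (j + 1) = k + j + 1 := by omega
      rw [h3, h4, h5, Nat.choose_succ_succ' (k + j) j]
      omega

/-- For `n ≥ 1`, the number of compositions of `n` into odd parts with
exactly `n - 2i` parts equals the binomial coefficient `C(n-1-i, i)`. -/
theorem card_odd_compositions_fixed_length (n : ℕ) (hn : 1 ≤ n) (i : ℕ) :
    (Finset.univ.filter (fun c : Composition n =>
        (∀ x ∈ c.blocks, Odd x) ∧ c.length = n - 2 * i)).card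
      = Nat.choose (n - 1 - i) i := by
  show fOdd n (n - 2 * i) = _
  by_cases h : 2 * i < n
  · have hk : (n - 2 * i) + 2 * i = n := by omega
    have := fOdd_key (n - 2 * i) i
    rw [hk] at this
    exact this
  · have hk : n - 2 * i = 0 := by omega
    rw [hk, fOdd_zero_right n hn, Nat.choose_eq_zero_of_lt (by omega)]
end

section
/- Let N be the n×n nilpotent Jordan block with ones on the superdiagonal and zeros elsewhere, with n even. Then there is no invertible symmetric n×n matrix A over a field of characteristic 0 satisfying Nᵀ A + A N = 0. -/
open Matrix

private lemma aux_sum1 {n : ℕ} {M : Type*} [AddCommMonoid M] (f : Fin n → M)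
    (a : ℕ) (ha : a < n) :
    (∑ k : Fin n, if (k : ℕ) + 1 = a + 1 then f k else 0) = f ⟨a, ha⟩ := by
  rw [Finset.sum_eq_single ⟨a, ha⟩]
  · simp
  · intro b _ hb
    rw [if_neg]
    simp only [Nat.add_right_cancel_iff]
    exact fun h => hb (Fin.ext h)
  · simp

/-- For the regular nilpotent Jordan block `N` of even size `n ≥ 1`, there is no
invertible symmetric matrix `A` with `Nᵀ A + A N = 0`. -/
theorem no_invariant_quadric_even (K : Type*) [Field K] [CharZero K] (n : ℕ)
    (hn : 0 < n) (hne : Even n)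
    (N : Matrix (Fin n) (Fin n) K)
    (hN : N = Matrix.of fun i j : Fin n => if (i : ℕ) + 1 = (j : ℕ) then (1 : K) else 0) :
    ¬ ∃ A : Matrix (Fin n) (Fin n) K, Aᵀ = A ∧ IsUnit A ∧ Nᵀ * A + A * N = 0 := by
  rintro ⟨A, hsym, hunit, heq⟩
  -- entrywise equation
  have key : ∀ i j : Fin n,
      (∑ k : Fin n, if (k : ℕ) + 1 = (i : ℕ) then A k j else 0)
      + (∑ k : Fin n, if (k : ℕ) + 1 = (j : ℕ) then A i k else 0) = 0 := by
    intro i j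
    have := congrFun (congrFun heq i) j
    simp only [Matrix.add_apply, Matrix.mul_apply, Matrix.transpose_apply, hN,
      Matrix.of_apply, Matrix.zero_apply, ite_mul, mul_ite, one_mul, mul_one,
      zero_mul, mul_zero] at this
    exact this
  -- column 0 vanishes except possibly last entry
  have col0 : ∀ (a : ℕ) (ha : a + 1 < n), A ⟨a, Nat.lt_of_succ_lt ha⟩ ⟨0, hn⟩ = 0 := by
    intro a ha
    have := key ⟨a + 1, ha⟩ ⟨0, hn⟩
    rw [aux_sum1 (fun k => A k ⟨0, hn⟩) a (Nat.lt_of_succ_lt ha)] at this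
    simpa using this
  -- recurrence
  have hrec : ∀ (a b : ℕ) (ha : a + 1 < n) (hb : b + 1 < n),
      A ⟨a, Nat.lt_of_succ_lt ha⟩ ⟨b + 1, hb⟩ + A ⟨a + 1, ha⟩ ⟨b, Nat.lt_of_succ_lt hb⟩ = 0 := by
    intro a b ha hb
    have := key ⟨a + 1, ha⟩ ⟨b + 1, hb⟩
    rw [aux_sum1 (fun k => A k ⟨b+1, hb⟩) a (Nat.lt_of_succ_lt ha),
      aux_sum1 (fun k => A ⟨a+1, ha⟩ k) b (Nat.lt_of_succ_lt hb)] at this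
    exact this
  -- antidiagonal: A_{n-1-k, k} = (-1)^k A_{n-1, 0}
  have anti : ∀ (k : ℕ) (hk : k < n),
      A ⟨n - 1 - k, by omega⟩ ⟨k, hk⟩ = (-1 : K) ^ k * A ⟨n - 1, by omega⟩ ⟨0, hn⟩ := by
    intro k hk
    induction k with
    | zero => simp
    | succ m ih =>
      have hm : m < n := Nat.lt_of_succ_lt hk
      have h1 : n - 1 - (m + 1) + 1 < n := by omega
      have h2 : m + 1 < n := hk
      have := hrec (n - 1 - (m + 1)) m h1 h2
      have e1 : n - 1 - (m + 1) + 1 = n - 1 - m := by omega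
      rw [show (⟨n - 1 - (m+1) + 1, h1⟩ : Fin n) = ⟨n - 1 - m, by omega⟩ from Fin.ext e1] at this
      rw [ih hm] at this
      have h3 : A ⟨n - 1 - (m + 1), by omega⟩ ⟨m + 1, hk⟩ = -((-1:K)^m * A ⟨n-1, by omega⟩ ⟨0, hn⟩) := by
        linear_combination this
      rw [h3]; ring
  -- corner entry is zero
  have corner : A ⟨n - 1, by omega⟩ ⟨0, hn⟩ = 0 := by
    have h1 := anti (n - 1) (by omega)
    have hsym' : A ⟨n - 1 - (n-1), by omega⟩ ⟨n - 1, by omega⟩ = A ⟨n-1, by omega⟩ ⟨n - 1 - (n-1), by omega⟩ := by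
      conv_lhs => rw [← hsym]
      rfl
    have e0 : n - 1 - (n - 1) = 0 := by omega
    have hodd : Odd (n - 1) := by
      obtain ⟨m, rfl⟩ := hne
      exact ⟨m - 1, by omega⟩
    rw [Odd.neg_one_pow hodd] at h1
    rw [show (⟨n-1-(n-1), by omega⟩ : Fin n) = ⟨0, hn⟩ from Fin.ext e0] at h1 hsym'
    rw [h1] at hsym'
    have h2 : (2 : K) * A ⟨n - 1, by omega⟩ ⟨0, hn⟩ = 0 := by linear_combination - hsym'
    exact (mul_eq_zero.mp h2).resolve_left two_ne_zero
  -- whole column 0 is zero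
  have colz : ∀ i : Fin n, A i ⟨0, hn⟩ = 0 := by
    intro i
    rcases Nat.lt_or_ge ((i : ℕ) + 1) n with h | h
    · have := col0 i h
      rwa [show (⟨(i:ℕ), Nat.lt_of_succ_lt h⟩ : Fin n) = i from Fin.ext rfl] at this
    · have hi : (i : ℕ) = n - 1 := by omega
      rw [show i = ⟨n - 1, by omega⟩ from Fin.ext hi]
      exact corner
  -- contradiction with invertibility
  set v : Fin n → K := Pi.single (⟨0, hn⟩ : Fin n) (1 : K) with hv_def
  have hv : A *ᵥ v = 0 := by
    funext i
    simp [hv_def, Matrix.mulVec_single, colz i]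
  obtain ⟨u, hu⟩ := hunit
  obtain ⟨B, hB⟩ : ∃ B : Matrix (Fin n) (Fin n) K, B * A = 1 :=
    ⟨↑u⁻¹, by rw [← hu]; exact_mod_cast u.inv_mul⟩
  have hzero : v = 0 := by
    calc v = (B * A) *ᵥ v := by rw [hB, Matrix.one_mulVec]
    _ = B *ᵥ (A *ᵥ v) := by rw [← Matrix.mulVec_mulVec]
    _ = 0 := by rw [hv, Matrix.mulVec_zero]
  have := congrFun hzero ⟨0, hn⟩
  simp [hv_def] at this
end

section
/- Let γ = (γ_1,...,γ_k) and τ = (τ_1,...,τ_l) be compositions of n with odd parts, with γ_1 > 1 and τ_1 = 1. If τ ≤ γ in the poset F_n, then τ_1 = τ_2 = ... = τ_{γ_1} = 1, i.e., the first γ_1 parts of τ all equal 1. -/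
/-- `γ` is a composition of `n` into odd parts (parts recorded as a list). -/
def OddComp (n : ℕ) (γ : List ℕ) : Prop :=
  γ.sum = n ∧ ∀ x ∈ γ, Odd x

/-- `CoversF γ ρ`: `ρ` is obtained from `γ` by replacing a part `m > 1`
by the three consecutive parts `m - 2, 1, 1`. -/
def CoversF (γ ρ : List ℕ) : Prop :=
  ∃ (pre post : List ℕ) (m : ℕ), 1 < m ∧
    γ = pre ++ m :: post ∧ ρ = pre ++ (m - 2) :: 1 :: 1 :: post

/-- The partial order on odd-part compositions: the reflexive-transitive
closure of the covering relation. -/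
def leF (ρ γ : List ℕ) : Prop :=
  Relation.ReflTransGen (fun a b => CoversF b a) ρ γ

lemma coversF_append_split {a b ρ : List ℕ} (h : CoversF (a ++ b) ρ) :
    (∃ a', ρ = a' ++ b ∧ CoversF a a') ∨ (∃ b', ρ = a ++ b' ∧ CoversF b b') := by
  obtain ⟨pre, post, m, hm, heq, hρ⟩ := h
  rcases List.append_eq_append_iff.mp heq with ⟨l, hpre, hb⟩ | ⟨l, ha, hl⟩
  · right
    exact ⟨l ++ (m - 2) :: 1 :: 1 :: post, by simp [hρ, hpre], l, post, m, hm, hb, by simp⟩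
  · cases l with
    | nil =>
      right
      simp only [List.append_nil] at ha
      simp only [List.nil_append] at hl
      exact ⟨(m - 2) :: 1 :: 1 :: post, by simp [hρ, ha], [], post, m, hm, hl.symm, rfl⟩
    | cons x l' =>
      left
      rw [List.cons_append] at hl
      obtain ⟨hx, hpost⟩ := List.cons_eq_cons.mp hl
      subst hx
      refine ⟨pre ++ (m - 2) :: 1 :: 1 :: l', by simp [hρ, hpost], pre, l', m, hm, ha, rfl⟩

lemma rtg_append_split' {γ τ : List ℕ}
    (h : Relation.ReflTransGen CoversF γ τ) :
    ∀ a b : List ℕ, γ = a ++ b →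
    ∃ A B, τ = A ++ B ∧ Relation.ReflTransGen CoversF a A ∧
      Relation.ReflTransGen CoversF b B := by
  induction h using Relation.ReflTransGen.head_induction_on with
  | refl => exact fun a b hab => ⟨a, b, hab, .refl, .refl⟩
  | head hstep _ ih =>
    rintro a b rfl
    rcases coversF_append_split hstep with ⟨a', hρ, hc⟩ | ⟨b', hρ, hc⟩
    · obtain ⟨A, B, h1, h2, h3⟩ := ih a' b hρ
      exact ⟨A, B, h1, .head hc h2, h3⟩
    · obtain ⟨A, B, h1, h2, h3⟩ := ih a b' hρ
      exact ⟨A, B, h1, h2, .head hc h3⟩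

lemma rtg_singleton {g : ℕ} {A : List ℕ}
    (h : Relation.ReflTransGen CoversF [g] A) :
    ∃ j, 2 * j ≤ g ∧ A = (g - 2 * j) :: List.replicate (2 * j) 1 := by
  induction h with
  | refl => exact ⟨0, by simp, by simp⟩
  | tail _ hstep ih =>
    obtain ⟨j, hj, hB⟩ := ih
    obtain ⟨pre, post, m, hm, heq, hρ⟩ := hstep
    subst hB
    cases pre with
    | cons x pre' =>
      exfalso
      rw [List.cons_append] at heq
      obtain ⟨-, ht⟩ := List.cons_eq_cons.mp heq
      have : m ∈ List.replicate (2 * j) 1 := ht ▸ (by simp)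
      simp at this
      omega
    | nil =>
      simp only [List.nil_append] at heq hρ
      obtain ⟨h2, h3⟩ := List.cons_eq_cons.mp heq
      subst h2
      subst h3
      have hg : 2 * (j + 1) ≤ g := by omega
      refine ⟨j + 1, hg, ?_⟩
      rw [hρ]
      have h4 : g - 2 * j - 2 = g - 2 * (j + 1) := by omega
      have h5 : 2 * (j + 1) = 2 * j + 1 + 1 := by omega
      rw [h4, h5, List.replicate_succ, List.replicate_succ]

/-- If `γ, τ ∈ F_n` with `γ₁ > 1` and `τ₁ = 1`, and `τ ≤ γ`, then the first
`γ₁` parts of `τ` are all equal to `1`. -/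
theorem Fn_initial_ones (n : ℕ) (γ τ : List ℕ)
    (hγ : OddComp n γ) (hτ : OddComp n τ)
    (hγ1 : 1 < γ.headI) (hτ1 : τ.headI = 1) (hle : leF τ γ) :
    τ.take γ.headI = List.replicate γ.headI 1 := by
  have hle' : Relation.ReflTransGen CoversF γ τ := Relation.reflTransGen_swap.mp hle
  cases γ with
  | nil => simp at hγ1
  | cons g rest =>
    simp only [List.headI] at hγ1 ⊢
    obtain ⟨A, B, hτeq, hA, hB⟩ := rtg_append_split' hle' [g] rest rfl
    obtain ⟨j, hj, hAeq⟩ := rtg_singleton hA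
    subst hAeq
    have hhead : τ.headI = g - 2 * j := by rw [hτeq]; simp
    have h1 : g - 2 * j = 1 := by rw [← hhead, hτ1]
    have hlen : 2 * j = g - 1 := by omega
    have hArep : (g - 2 * j) :: List.replicate (2 * j) 1 = List.replicate g 1 := by
      rw [h1, hlen, show g = (g - 1) + 1 by omega, List.replicate_succ]
      simp
    rw [hτeq, hArep]
    exact List.take_left' (by simp)
end

section
/- The poset F_n of compositions of n into odd parts (with the order generated by the covering relation where a part m > 1 is replaced by m-2, 1, 1) is a meet-semilattice: any two elements have a greatest lower bound. -/
inductive Desc : List ℕ → List ℕ → Prop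
  | nil : Desc [] []
  | cons (j m : ℕ) {σ τ : List ℕ} (h : 2*j < m) (hd : Desc σ τ) :
      Desc ((m - 2*j) :: (List.replicate (2*j) 1 ++ σ)) (m :: τ)

theorem Desc_sum {ρ γ : List ℕ} (h : Desc ρ γ) : ρ.sum = γ.sum := by
  induction h with
  | nil => rfl
  | cons j m h hd ih => simp [List.sum_append, List.sum_replicate, ih]; omega

theorem Desc_odd {ρ γ : List ℕ} (h : Desc ρ γ) (hγ : ∀ x ∈ γ, Odd x) :
    ∀ x ∈ ρ, Odd x := by
  induction h with
  | nil => exact hγ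
  | cons j m h hd ih =>
    intro x hx
    rcases List.mem_cons.1 hx with rfl | hx
    · obtain ⟨k, hk⟩ := hγ m (by simp)
      exact ⟨k - j, by omega⟩
    · rcases List.mem_append.1 hx with hx | hx
      · rw [List.eq_of_mem_replicate hx]; exact ⟨0, rfl⟩
      · exact ih (fun y hy => hγ y (by simp [hy])) x hx

theorem Desc_refl {γ : List ℕ} (h : ∀ x ∈ γ, 0 < x) : Desc γ γ := by
  induction γ with
  | nil => exact Desc.nil
  | cons a as ih =>
    have := Desc.cons 0 a (by simpa using h a (by simp)) (ih fun x hx => h x (by simp [hx]))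
    simpa using this

theorem Desc_nil_inv {τ : List ℕ} (h : Desc τ []) : τ = [] := by cases h; rfl

theorem Desc_cons_inv {τ : List ℕ} {m : ℕ} {γ : List ℕ} (h : Desc τ (m :: γ)) :
    ∃ j σ, 2*j < m ∧ Desc σ γ ∧ τ = (m - 2*j) :: (List.replicate (2*j) 1 ++ σ) := by
  cases h with
  | cons j m h hd => exact ⟨j, _, h, hd, rfl⟩

theorem Desc_replicate_inv : ∀ (k : ℕ) {τ y : List ℕ},
    Desc τ (List.replicate k 1 ++ y) → ∃ σ, τ = List.replicate k 1 ++ σ ∧ Desc σ y := by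
  intro k
  induction k with
  | zero => intro τ y h; exact ⟨τ, by simp, h⟩
  | succ k ih =>
    intro τ y h
    rw [List.replicate_succ, List.cons_append] at h
    obtain ⟨j, σ, hj, hσ, rfl⟩ := Desc_cons_inv h
    have hj0 : j = 0 := by omega
    subst hj0
    obtain ⟨σ', rfl, hσ'⟩ := ih hσ
    exact ⟨σ', by simp [List.replicate_succ], hσ'⟩

theorem Desc_replicate_mono (k : ℕ) {σ y : List ℕ} (h : Desc σ y) :
    Desc (List.replicate k 1 ++ σ) (List.replicate k 1 ++ y) := by
  induction k with
  | zero => simpa using h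
  | succ k ih =>
    have := Desc.cons 0 1 (by norm_num) ih
    simpa [List.replicate_succ] using this

theorem one_lt_split : ∀ (k : ℕ) (l1 l2 c' : List ℕ) (m : ℕ), 1 < m →
    l1 ++ m :: l2 = List.replicate k 1 ++ c' →
    ∃ q, l1 = List.replicate k 1 ++ q ∧ c' = q ++ m :: l2 := by
  intro k
  induction k with
  | zero => intro l1 l2 c' m _ h; exact ⟨l1, by simp, by simpa using h.symm⟩
  | succ k ih =>
    intro l1 l2 c' m hm h
    rw [List.replicate_succ, List.cons_append] at h
    cases l1 with
    | nil => simp at h; omega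
    | cons x l1' =>
      rw [List.cons_append, List.cons_eq_cons] at h
      obtain ⟨rfl, h2⟩ := h
      obtain ⟨q, hq1, hq2⟩ := ih l1' l2 c' m hm h2
      exact ⟨q, by simp [List.replicate_succ, hq1], hq2⟩

theorem Desc_cover {γ c a : List ℕ} (hγ : ∀ x ∈ γ, Odd x) (h : Desc c γ)
    (hc : CoversF c a) : Desc a γ := by
  induction h generalizing a with
  | nil =>
    obtain ⟨pre, post, m, _, h1, _⟩ := hc
    exact absurd h1.symm (by simp)
  | cons j m h hd ih =>
    obtain ⟨pre, post, M, hM, h1, h2⟩ := hc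
    rename_i σ τ
    have hm : Odd m := hγ m (by simp)
    cases pre with
    | nil =>
      simp only [List.nil_append] at h1 h2
      rw [List.cons_eq_cons] at h1
      obtain ⟨hMh, hpost⟩ := h1
      have hMo : Odd M := by rw [← hMh]; obtain ⟨k, hk⟩ := hm; exact ⟨k - j, by omega⟩
      have hM3 : 3 ≤ M := by obtain ⟨k, hk⟩ := hMo; omega
      have hjm : 2*(j+1) < m := by omega
      have := Desc.cons (j+1) m hjm hd
      rw [h2, ← hpost]
      have e1 : M - 2 = m - 2*(j+1) := by omega
      have e2 : (1:ℕ) :: 1 :: (List.replicate (2*j) 1 ++ σ)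
          = List.replicate (2*(j+1)) 1 ++ σ := by
        have : 2*(j+1) = 2 + 2*j := by ring
        rw [this, List.replicate_add]
        simp [List.replicate_succ]
      rw [e1]
      simpa [e2] using this
    | cons x pre' =>
      rw [List.cons_append, List.cons_eq_cons] at h1
      obtain ⟨rfl, h1'⟩ := h1
      obtain ⟨q, hq1, hq2⟩ := one_lt_split (2*j) pre' post σ M hM h1'.symm
      have hcov : CoversF σ (q ++ (M-2) :: 1 :: 1 :: post) := ⟨q, post, M, hM, hq2, rfl⟩
      have hrest : ∀ x ∈ τ, Odd x := fun y hy => hγ y (by simp [hy])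
      have := ih hrest hcov
      have := Desc.cons j m h this
      rw [h2, hq1]
      simpa using this
theorem leF_refl (γ : List ℕ) : leF γ γ := Relation.ReflTransGen.refl

theorem leF_trans {a b c : List ℕ} (h1 : leF a b) (h2 : leF b c) : leF a c :=
  Relation.ReflTransGen.trans h1 h2

theorem covers_cons {x : ℕ} {γ ρ : List ℕ} (h : CoversF γ ρ) : CoversF (x :: γ) (x :: ρ) := by
  obtain ⟨pre, post, m, hm, h1, h2⟩ := h
  exact ⟨x :: pre, post, m, hm, by simp [h1], by simp [h2]⟩

theorem covers_append_right {s γ ρ : List ℕ} (h : CoversF γ ρ) : CoversF (γ ++ s) (ρ ++ s) := by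
  obtain ⟨pre, post, m, hm, h1, h2⟩ := h
  exact ⟨pre, post ++ s, m, hm, by simp [h1], by simp [h2]⟩

theorem leF_cons {x : ℕ} {ρ γ : List ℕ} (h : leF ρ γ) : leF (x :: ρ) (x :: γ) :=
  Relation.ReflTransGen.lift (r := fun a b => CoversF b a) (p := fun a b => CoversF b a) (x :: ·) (fun _ _ hab => covers_cons hab) _ _ h

theorem leF_append_right {s ρ γ : List ℕ} (h : leF ρ γ) : leF (ρ ++ s) (γ ++ s) :=
  Relation.ReflTransGen.lift (r := fun a b => CoversF b a) (p := fun a b => CoversF b a) (· ++ s) (fun _ _ hab => covers_append_right hab) _ _ h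

theorem leF_stepdown (m : ℕ) : ∀ j, 2*j < m → leF ((m - 2*j) :: List.replicate (2*j) 1) [m] := by
  intro j
  induction j with
  | zero => intro _; simpa using leF_refl [m]
  | succ j ih =>
    intro hj
    have h1 : leF ((m - 2*j) :: List.replicate (2*j) 1) [m] := ih (by omega)
    refine leF_trans (Relation.ReflTransGen.single ?_) h1
    refine ⟨[], List.replicate (2*j) 1, m - 2*j, by omega, rfl, ?_⟩
    have e1 : m - 2*j - 2 = m - 2*(j+1) := by omega
    have e2 : (1:ℕ) :: 1 :: List.replicate (2*j) 1 = List.replicate (2*(j+1)) 1 := by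
      rw [show 2*(j+1) = 2 + 2*j by ring, List.replicate_add]
      simp [List.replicate_succ]
    simp [e1, e2]

theorem Desc_leF {ρ γ : List ℕ} (h : Desc ρ γ) : leF ρ γ := by
  induction h with
  | nil => exact leF_refl []
  | cons j m h hd ih =>
    rename_i σ τ
    have h1 : leF ((m - 2*j) :: (List.replicate (2*j) 1 ++ σ)) (m :: σ) := by
      have := leF_append_right (s := σ) (leF_stepdown m j h)
      simpa using this
    exact leF_trans h1 (leF_cons ih)

theorem leF_Desc {ρ γ : List ℕ} (hγ : ∀ x ∈ γ, Odd x) (h : leF ρ γ) : Desc ρ γ := by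
  unfold leF at h
  induction h using Relation.ReflTransGen.head_induction_on with
  | refl => exact Desc_refl (fun x hx => (hγ x hx).pos)
  | head hac _ ih => exact Desc_cover hγ ih hac

theorem covers_length {γ ρ : List ℕ} (h : CoversF γ ρ) : ρ.length = γ.length + 2 := by
  obtain ⟨pre, post, m, _, rfl, rfl⟩ := h
  simp; omega

theorem leF_length {ρ γ : List ℕ} (h : leF ρ γ) : γ.length ≤ ρ.length := by
  unfold leF at h
  induction h with
  | refl => exact le_rfl
  | @tail b c hrb hbc ih =>
    have := covers_length hbc
    omega

theorem leF_antisymm {a b : List ℕ} (h1 : leF a b) (h2 : leF b a) : a = b := by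
  rcases (Relation.ReflTransGen.cases_head h1) with rfl | ⟨c, hac, hcb⟩
  · rfl
  · exfalso
    have l1 := covers_length hac
    have l2 := leF_length hcb
    have l3 := leF_length h2
    omega
def MeetStmt (n : ℕ) : Prop :=
  ∀ γ ρ : List ℕ, (∀ x ∈ γ, Odd x) → (∀ x ∈ ρ, Odd x) → γ.sum = n → ρ.sum = n →
    ∃ μ, (∀ x ∈ μ, Odd x) ∧ μ.sum = n ∧ Desc μ γ ∧ Desc μ ρ ∧
      ∀ τ : List ℕ, (∀ x ∈ τ, Odd x) → Desc τ γ → Desc τ ρ → Desc τ μ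

theorem meet_aux (n : ℕ) (IH : ∀ m, m < n → MeetStmt m) (a b : ℕ) (as bs : List ℕ)
    (hγ : ∀ x ∈ a :: as, Odd x) (hρ : ∀ x ∈ b :: bs, Odd x)
    (hγs : (a :: as).sum = n) (hρs : (b :: bs).sum = n) (hab : a < b) :
    ∃ μ, (∀ x ∈ μ, Odd x) ∧ μ.sum = n ∧ Desc μ (a :: as) ∧ Desc μ (b :: bs) ∧
      ∀ τ : List ℕ, (∀ x ∈ τ, Odd x) → Desc τ (a :: as) → Desc τ (b :: bs) → Desc τ μ := by
  have ha : Odd a := hγ a (by simp)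
  have hb : Odd b := hρ b (by simp)
  have ha1 : 1 ≤ a := ha.pos
  simp only [List.sum_cons] at hγs hρs
  obtain ⟨w, hw⟩ : ∃ w, b - a = 2*w := by
    obtain ⟨p, hp⟩ := ha; obtain ⟨q, hq⟩ := hb; exact ⟨q - p, by omega⟩
  obtain ⟨μ', hodd', hsum', hd1, hd2, hgr'⟩ :=
    IH (n - a) (by omega) as (List.replicate (b - a) 1 ++ bs)
      (fun x hx => hγ x (by simp [hx]))
      (by intro x hx
          rcases List.mem_append.1 hx with hx | hx
          · rw [List.eq_of_mem_replicate hx]; exact ⟨0, rfl⟩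
          · exact hρ x (by simp [hx]))
      (by omega)
      (by simp [List.sum_replicate]; omega)
  obtain ⟨σ, hμ'eq, hσ⟩ := Desc_replicate_inv (b - a) hd2
  refine ⟨a :: μ', ?_, ?_, ?_, ?_, ?_⟩
  · intro x hx
    rcases List.mem_cons.1 hx with rfl | hx
    · exact ha
    · exact hodd' x hx
  · simp [hsum']; omega
  · simpa using Desc.cons 0 a (by omega) hd1
  · have h := Desc.cons w b (by omega) hσ
    have e1 : b - 2*w = a := by omega
    rw [e1, ← hw] at h
    rw [hμ'eq]
    exact h
  · intro τ hτ hτγ hτρ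
    obtain ⟨j1, σ1, hj1, hσ1, e1⟩ := Desc_cons_inv hτγ
    obtain ⟨j2, σ2, hj2, hσ2, e2⟩ := Desc_cons_inv hτρ
    rw [e1] at e2
    rw [List.cons_eq_cons] at e2
    obtain ⟨eh, et⟩ := e2
    have hj : 2*j2 = 2*j1 + (b - a) := by omega
    rw [hj, List.replicate_add, List.append_assoc] at et
    have hσ12 : σ1 = List.replicate (b - a) 1 ++ σ2 := List.append_cancel_left et
    have hσ1odd : ∀ x ∈ σ1, Odd x := by
      intro x hx
      exact hτ x (by rw [e1]; simp [hx])
    have hbelow : Desc σ1 (List.replicate (b - a) 1 ++ bs) := by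
      rw [hσ12]; exact Desc_replicate_mono (b - a) hσ2
    have hfin : Desc σ1 μ' := hgr' σ1 hσ1odd hσ1 hbelow
    rw [e1]
    exact Desc.cons j1 a hj1 hfin

theorem meet_exists : ∀ n, MeetStmt n := by
  intro n
  induction n using Nat.strong_induction_on with
  | _ n IH =>
    intro γ ρ hγ hρ hγs hρs
    match γ, ρ with
    | [], ρ =>
      have : ρ = [] := by
        cases ρ with
        | nil => rfl
        | cons x xs =>
          exfalso
          have := (hρ x (by simp)).pos
          simp at hγs hρs
          omega
      subst this
      simp at hγs
      exact ⟨[], by simp, by simpa using hγs, Desc.nil, Desc.nil,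
        fun τ _ h1 _ => by rw [Desc_nil_inv h1]; exact Desc.nil⟩
    | a :: as, [] =>
      exfalso
      have := (hγ a (by simp)).pos
      simp at hγs hρs
      omega
    | a :: as, b :: bs =>
      rcases lt_trichotomy a b with hab | hab | hab
      · exact meet_aux n IH a b as bs hγ hρ hγs hρs hab
      · subst hab
        have ha : Odd a := hγ a (by simp)
        simp only [List.sum_cons] at hγs hρs
        obtain ⟨μ', hodd', hsum', hd1, hd2, hgr'⟩ :=
          IH (n - a) (by have := ha.pos; omega) as bs
            (fun x hx => hγ x (by simp [hx])) (fun x hx => hρ x (by simp [hx]))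
            (by omega) (by omega)
        refine ⟨a :: μ', ?_, ?_, ?_, ?_, ?_⟩
        · intro x hx
          rcases List.mem_cons.1 hx with rfl | hx
          · exact ha
          · exact hodd' x hx
        · simp [hsum']; omega
        · simpa using Desc.cons 0 a (by have := ha.pos; omega) hd1
        · simpa using Desc.cons 0 a (by have := ha.pos; omega) hd2
        · intro τ hτ hτγ hτρ
          obtain ⟨j1, σ1, hj1, hσ1, e1⟩ := Desc_cons_inv hτγ
          obtain ⟨j2, σ2, hj2, hσ2, e2⟩ := Desc_cons_inv hτρ
          rw [e1] at e2
          rw [List.cons_eq_cons] at e2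
          obtain ⟨eh, et⟩ := e2
          have hj : j1 = j2 := by omega
          subst hj
          have hσ12 : σ1 = σ2 := List.append_cancel_left et
          have hσ1odd : ∀ x ∈ σ1, Odd x := fun x hx => hτ x (by rw [e1]; simp [hx])
          have hfin : Desc σ1 μ' := hgr' σ1 hσ1odd hσ1 (hσ12 ▸ hσ2)
          rw [e1]
          exact Desc.cons j1 a hj1 hfin
      · obtain ⟨μ, h1, h2, h3, h4, h5⟩ :=
          meet_aux n IH b a bs as hρ hγ hρs hγs hab
        exact ⟨μ, h1, h2, h4, h3, fun τ ht hg hr => h5 τ ht hr hg⟩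

/-- The poset `F_n` is a meet-semilattice: any two elements have a unique
greatest lower bound. -/
theorem Fn_meet_semilattice (n : ℕ) (γ ρ : List ℕ)
    (hγ : OddComp n γ) (hρ : OddComp n ρ) :
    ∃! μ : List ℕ, OddComp n μ ∧ leF μ γ ∧ leF μ ρ ∧
      ∀ τ : List ℕ, OddComp n τ → leF τ γ → leF τ ρ → leF τ μ := by
  obtain ⟨hγs, hγo⟩ := hγ
  obtain ⟨hρs, hρo⟩ := hρ
  obtain ⟨μ, hodd, hsum, hd1, hd2, hgr⟩ := meet_exists n γ ρ hγo hρo hγs hρs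
  have hμγ : leF μ γ := Desc_leF hd1
  have hμρ : leF μ ρ := Desc_leF hd2
  have hμo : OddComp n μ := ⟨hsum, hodd⟩
  have hgreat : ∀ τ : List ℕ, OddComp n τ → leF τ γ → leF τ ρ → leF τ μ := by
    intro τ hτ h1 h2
    exact Desc_leF (hgr τ hτ.2 (leF_Desc hγo h1) (leF_Desc hρo h2))
  refine ⟨μ, ⟨hμo, hμγ, hμρ, hgreat⟩, ?_⟩
  rintro y ⟨hyo, hyγ, hyρ, hygr⟩
  exact leF_antisymm (hgreat y hyo hyγ hyρ) (hygr μ hμo hμγ hμρ)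
end

section
/- An odd-part composition γ of n is maximal in the poset F_n if and only if γ contains no two consecutive parts equal to 1, except possibly two consecutive 1's at the very beginning of γ. -/
lemma ones_of_covers (pre post : List ℕ) (x : ℕ) :
    (pre ++ x :: 1 :: 1 :: post)[pre.length + 1]? = some 1 ∧
    (pre ++ x :: 1 :: 1 :: post)[pre.length + 2]? = some 1 := by
  constructor <;>
  simp [List.getElem?_append_right, List.getElem_append_right]

/-- `γ ∈ F_n` is maximal iff it has no two consecutive parts equal to `1`,
except possibly two consecutive `1`'s at the very beginning. -/
theorem Fn_maximal_iff (n : ℕ) (γ : List ℕ) (hγ : OddComp n γ) :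
    (∀ ρ : List ℕ, OddComp n ρ → leF γ ρ → ρ = γ) ↔
    (∀ i : ℕ, γ[i]? = some 1 → γ[i + 1]? = some 1 → i = 0) := by
  constructor
  · intro hmax i h1 h2
    by_contra hi
    obtain ⟨j, rfl⟩ : ∃ j, i = j + 1 := ⟨i - 1, by omega⟩
    obtain ⟨hlt1, hj1⟩ := List.getElem?_eq_some_iff.mp h1
    obtain ⟨hlt2, hj2⟩ := List.getElem?_eq_some_iff.mp h2
    have hdec : γ = γ.take j ++ γ[j] :: 1 :: 1 :: γ.drop (j + 3) := by
      conv_lhs => rw [← List.take_append_drop j γ]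
      rw [List.drop_eq_getElem_cons (l := γ) (i := j) (by omega),
          List.drop_eq_getElem_cons (l := γ) (i := j + 1) (by omega),
          List.drop_eq_getElem_cons (l := γ) (i := j + 2) (by omega)]
      have hj2' : γ[j + 2]'(by omega) = 1 := hj2
      simp only [hj1, hj2']
    set a := γ[j] with ha_def
    have ha : Odd a := hγ.2 a (List.getElem_mem _)
    set δ : List ℕ := γ.take j ++ (a + 2) :: γ.drop (j + 3) with hδ_def
    have hcov : CoversF δ γ :=
      ⟨γ.take j, γ.drop (j + 3), a + 2, by omega, rfl, by
        rw [show a + 2 - 2 = a from rfl]; exact hdec⟩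
    have hδ : OddComp n δ := by
      constructor
      · have hsum := hγ.1
        rw [hdec] at hsum
        simp only [hδ_def, List.sum_append, List.sum_cons] at hsum ⊢
        omega
      · intro x hx
        simp only [hδ_def, List.mem_append, List.mem_cons] at hx
        rcases hx with hx | rfl | hx
        · exact hγ.2 x (List.take_subset _ _ hx)
        · obtain ⟨k, hk⟩ := ha; exact ⟨k + 1, by omega⟩
        · exact hγ.2 x (List.drop_subset _ _ hx)
    have heq := hmax δ hδ (Relation.ReflTransGen.single hcov)
    have hlen := congrArg List.length heq
    rw [hdec] at hlen
    simp only [hδ_def, List.length_append, List.length_cons] at hlen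
    omega
  · intro hno ρ hρ hle
    rcases Relation.ReflTransGen.cases_head hle with h | ⟨c, hc, _⟩
    · exact h.symm
    · obtain ⟨pre, post, m, hm, hc1, hγeq⟩ := hc
      have h := ones_of_covers pre post (m - 2)
      rw [← hγeq] at h
      have := hno (pre.length + 1) h.1
        (by rw [show pre.length + 1 + 1 = pre.length + 2 from rfl]; exact h.2)
      omega
end

section
/- Let a_n be the number of maximal elements of the poset F_n of odd-part compositions of n (equivalently, the number of odd-part compositions of n with no two consecutive 1's except possibly two consecutive 1's at the beginning). Then a_n = a_{n-1} + a_{n-3} for n ≥ 4, with a_1 = a_2 = a_3 = 1. -/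
/-- The set of maximal elements of the poset `F_n`. -/
def maxSet (n : ℕ) : Set (List ℕ) :=
  {γ | OddComp n γ ∧ ∀ ρ : List ℕ, OddComp n ρ → leF γ ρ → ρ = γ}

/-! ### auxiliary -/

abbrev PP (a b : ℕ) : Prop := ¬(a = 1 ∧ b = 1)

def Sset (n : ℕ) : Set (List ℕ) := {γ | OddComp n γ ∧ List.Chain' PP γ}
def Tset (n : ℕ) : Set (List ℕ) := {γ | OddComp n γ ∧ List.Chain' PP γ ∧ γ.head? ≠ some 1}
def Aset (n : ℕ) : Set (List ℕ) := {γ | OddComp n γ ∧ List.Chain' PP γ.tail}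

lemma oddComp_pos {n : ℕ} {γ : List ℕ} (h : OddComp n γ) : ∀ x ∈ γ, 0 < x :=
  fun x hx => (h.2 x hx).pos

lemma oddComp_cons {n a : ℕ} {δ : List ℕ} (h : OddComp n (a :: δ)) :
    Odd a ∧ 1 ≤ a ∧ a ≤ n ∧ OddComp (n - a) δ := by
  obtain ⟨hs, hp⟩ := h
  simp only [List.sum_cons] at hs
  have ha : Odd a := hp a (by simp)
  refine ⟨ha, ha.pos, by omega, by omega, fun x hx => hp x (by simp [hx])⟩

lemma oddComp_zero {γ : List ℕ} (h : OddComp 0 γ) : γ = [] := by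
  cases γ with
  | nil => rfl
  | cons a δ => have := oddComp_cons h; omega

lemma oddComp_one {γ : List ℕ} (h : OddComp 1 γ) : γ = [1] := by
  cases γ with
  | nil => exact absurd h.1 (by simp)
  | cons a δ =>
    obtain ⟨_, h1, h2, h3⟩ := oddComp_cons h
    have ha : a = 1 := by omega
    subst ha
    simp [oddComp_zero h3]

lemma oddComp_two {γ : List ℕ} (h : OddComp 2 γ) : γ = [1, 1] := by
  cases γ with
  | nil => exact absurd h.1 (by simp)
  | cons a δ =>
    obtain ⟨ho, h1, h2, h3⟩ := oddComp_cons h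
    have ha : a = 1 := by rcases ho with ⟨k, hk⟩; omega
    subst ha
    simp [oddComp_one h3]

/-- Finiteness of the set of odd compositions. -/
lemma finite_oddComp (n : ℕ) : {γ | OddComp n γ}.Finite := by
  induction n using Nat.strong_induction_on with
  | _ n ih =>
    rcases n with _ | n
    · exact Set.Finite.subset (Set.finite_singleton []) fun γ h => oddComp_zero h
    · have hsub : {γ | OddComp (n + 1) γ} ⊆
          ⋃ a ∈ Finset.Icc 1 (n + 1), (a :: ·) '' {δ | OddComp (n + 1 - a) δ} := by
        intro γ hγ
        cases γ with
        | nil => exact absurd hγ.1 (by simp)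
        | cons a δ =>
          obtain ⟨_, h1, h2, h3⟩ := oddComp_cons hγ
          simp only [Set.mem_iUnion]
          exact ⟨a, by simp [Finset.mem_Icc]; omega, δ, h3, rfl⟩
      exact Set.Finite.subset
        (Set.Finite.biUnion (Finset.Icc 1 (n + 1)).finite_toSet
          (fun a ha => Set.Finite.image _ (ih (n + 1 - a)
            (by simp [Finset.mem_Icc] at ha; omega)))) hsub

lemma finite_S (n : ℕ) : (Sset n).Finite :=
  (finite_oddComp n).subset fun γ h => h.1
lemma finite_T (n : ℕ) : (Tset n).Finite :=
  (finite_oddComp n).subset fun γ h => h.1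
lemma finite_A (n : ℕ) : (Aset n).Finite :=
  (finite_oddComp n).subset fun γ h => h.1

/-- No list of the form `l ++ x :: 1 :: 1 :: post` is a `PP`-chain. -/
lemma not_chain'_bad (l : List ℕ) (x : ℕ) (post : List ℕ) :
    ¬ List.Chain' PP (l ++ x :: 1 :: 1 :: post) := by
  induction l with
  | nil =>
    intro h
    have h2 := (List.isChain_cons_cons.mp h).2
    exact (List.isChain_cons_cons.mp h2).1 ⟨rfl, rfl⟩
  | cons a l ih =>
    intro h
    exact ih h.tail

lemma chain'_tail_no_bad {γ : List ℕ} (h : List.Chain' PP γ.tail)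
    (pre : List ℕ) (x : ℕ) (post : List ℕ) : γ ≠ pre ++ x :: 1 :: 1 :: post := by
  intro hγ
  subst hγ
  cases pre with
  | nil =>
    simp only [List.nil_append, List.tail_cons] at h
    exact (List.isChain_cons_cons.mp h).1 ⟨rfl, rfl⟩
  | cons p pre' =>
    simp only [List.cons_append, List.tail_cons] at h
    exact not_chain'_bad pre' x post h

lemma not_chain'_tail_decomp : ∀ (γ : List ℕ), ¬ List.Chain' PP γ.tail →
    ∃ pre x post, γ = pre ++ x :: 1 :: 1 :: post := by
  intro γ
  induction γ with
  | nil => intro h; exact absurd List.isChain_nil h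
  | cons a δ ih =>
    intro h
    simp only [List.tail_cons] at h
    cases δ with
    | nil => exact absurd List.isChain_nil h
    | cons b ε =>
      rcases Classical.em (List.Chain' PP ε) with hc | hc
      · rw [List.Chain', List.isChain_cons] at h
        have hex : ¬ ∀ y ∈ ε.head?, PP b y := fun hall => h ⟨hall, hc⟩
        push_neg at hex
        obtain ⟨y, hy, hby⟩ := hex
        cases ε with
        | nil => simp at hy
        | cons c ε' =>
          simp only [List.head?_cons, Option.mem_def, Option.some.injEq] at hy
          subst hy
          have hb : b = 1 ∧ c = 1 := by tauto
          exact ⟨[], a, ε', by simp [hb.1, hb.2]⟩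
      · obtain ⟨pre, x, post, hd⟩ := ih (by simpa using hc)
        exact ⟨a :: pre, x, post, by simp [hd]⟩

/-- Covering preserves being an odd composition. -/
lemma coversF_oddComp {n : ℕ} {ρ γ : List ℕ} (hγ : OddComp n γ) (h : CoversF ρ γ) :
    OddComp n ρ := by
  obtain ⟨pre, post, m, hm, hρ, hγeq⟩ := h
  subst hρ hγeq
  obtain ⟨hs, hp⟩ := hγ
  have hodd : Odd (m - 2) := hp (m - 2) (by simp)
  have hmodd : Odd m := by
    rcases hodd with ⟨k, hk⟩; exact ⟨k + 1, by omega⟩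
  constructor
  · simp only [List.sum_append, List.sum_cons] at hs ⊢
    omega
  · intro x hx
    simp only [List.mem_append, List.mem_cons] at hx
    rcases hx with h1 | h1 | h1
    · exact hp x (by simp [h1])
    · exact h1 ▸ hmodd
    · exact hp x (by simp [h1])

lemma maxSet_eq_Aset (n : ℕ) : maxSet n = Aset n := by
  ext γ
  constructor
  · rintro ⟨h1, h2⟩
    refine ⟨h1, ?_⟩
    by_contra hc
    obtain ⟨pre, x, post, hd⟩ := not_chain'_tail_decomp γ hc
    have hx : Odd x := h1.2 x (by simp [hd])
    set ρ := pre ++ (x + 2) :: post with hρ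
    have hcov : CoversF ρ γ := ⟨pre, post, x + 2, by omega, rfl, by simp [hd]⟩
    have hρc : OddComp n ρ := coversF_oddComp h1 hcov
    have : ρ = γ := h2 ρ hρc (Relation.ReflTransGen.single hcov)
    have hlen : ρ.length = γ.length := by rw [this]
    simp [hρ, hd] at hlen
  · rintro ⟨h1, h2⟩
    refine ⟨h1, fun ρ hρ hle => ?_⟩
    rcases Relation.ReflTransGen.cases_head hle with h | ⟨b, hb, _⟩
    · exact h.symm
    · obtain ⟨pre, post, m, hm, hbeq, hγeq⟩ := hb
      exact absurd hγeq (chain'_tail_no_bad h2 pre (m - 2) post)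

lemma chain'_cons_one {δ : List ℕ} :
    List.Chain' PP (1 :: δ) ↔ List.Chain' PP δ ∧ δ.head? ≠ some 1 := by
  rw [List.Chain', List.Chain', List.isChain_cons]
  cases δ with
  | nil => simp
  | cons c ε =>
    simp only [List.head?_cons, Option.mem_def, Option.some.injEq, ne_eq]
    constructor
    · rintro ⟨h1, h2⟩
      exact ⟨h2, fun hc => h1 c rfl ⟨rfl, hc⟩⟩
    · rintro ⟨h1, h2⟩
      exact ⟨fun y hy hcon => h2 (hy.trans hcon.2), h1⟩

lemma chain'_cons_ne_one {a : ℕ} {δ : List ℕ} (ha : a ≠ 1) :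
    List.Chain' PP (a :: δ) ↔ List.Chain' PP δ := by
  rw [List.Chain', List.Chain', List.isChain_cons]
  simp only [and_iff_right_iff_imp]
  exact fun _ y _ hcon => ha hcon.1

lemma oddComp_cons_iff {n a : ℕ} {δ : List ℕ} (ha : Odd a) (han : a ≤ n) :
    OddComp n (a :: δ) ↔ OddComp (n - a) δ := by
  constructor
  · exact fun h => (oddComp_cons h).2.2.2
  · rintro ⟨hs, hp⟩
    refine ⟨by simp [hs]; omega, fun x hx => ?_⟩
    rcases List.mem_cons.mp hx with h | h
    · exact h ▸ ha
    · exact hp x h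

lemma Aset_eq (n : ℕ) (hn : 2 ≤ n) :
    Aset n = Sset n ∪ (fun δ => 1 :: 1 :: δ) '' Tset (n - 2) := by
  ext γ
  constructor
  · rintro ⟨h1, h2⟩
    rcases Classical.em (List.Chain' PP γ) with hc | hc
    · exact Or.inl ⟨h1, hc⟩
    · right
      cases γ with
      | nil => exact absurd List.isChain_nil hc
      | cons a δ =>
        simp only [List.tail_cons] at h2
        cases δ with
        | nil => exact absurd (List.isChain_singleton a) hc
        | cons b ε =>
          have hab : a = 1 ∧ b = 1 := by
            by_contra hcon
            exact hc (List.isChain_cons_cons.mpr ⟨hcon, h2⟩)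
          obtain ⟨rfl, rfl⟩ := hab
          rw [chain'_cons_one] at h2
          refine ⟨ε, ⟨?_, h2.1, h2.2⟩, rfl⟩
          · have := (oddComp_cons h1).2.2.2
        -- OddComp (n-1) (1::ε) → OddComp (n-2) ε
            have h3 := (oddComp_cons this).2.2.2
            have : n - 1 - 1 = n - 2 := by omega
            rwa [this] at h3
  · rintro (⟨h1, h2⟩ | ⟨δ, ⟨hd1, hd2, hd3⟩, rfl⟩)
    · exact ⟨h1, h2.tail⟩
    · refine ⟨?_, ?_⟩
      · rw [oddComp_cons_iff (by decide) (by omega), oddComp_cons_iff (by decide) (by omega)]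
        have : n - 1 - 1 = n - 2 := by omega
        rwa [this]
      · simpa [chain'_cons_one] using ⟨hd2, hd3⟩

lemma Sset_eq (n : ℕ) (hn : 1 ≤ n) :
    Sset n = Tset n ∪ (fun δ => 1 :: δ) '' Tset (n - 1) := by
  ext γ
  constructor
  · rintro ⟨h1, h2⟩
    cases γ with
    | nil => exact absurd h1.1 (by simp; omega)
    | cons a δ =>
      rcases Classical.em (a = 1) with rfl | ha
      · right
        rw [chain'_cons_one] at h2
        exact ⟨δ, ⟨(oddComp_cons h1).2.2.2, h2.1, h2.2⟩, rfl⟩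
      · exact Or.inl ⟨h1, h2, by simpa using ha⟩
  · rintro (⟨h1, h2, _⟩ | ⟨δ, ⟨hd1, hd2, hd3⟩, rfl⟩)
    · exact ⟨h1, h2⟩
    · exact ⟨(oddComp_cons_iff (by decide) (by omega)).mpr hd1,
        chain'_cons_one.mpr ⟨hd2, hd3⟩⟩

lemma Tset_eq (n : ℕ) (hn : 3 ≤ n) :
    Tset n = (fun δ => 3 :: δ) '' Sset (n - 3) ∪
      (fun γ => (γ.headI + 2) :: γ.tail) '' Tset (n - 2) := by
  ext γ
  constructor
  · rintro ⟨h1, h2, h3⟩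
    cases γ with
    | nil => exact absurd h1.1 (by simp; omega)
    | cons a δ =>
      obtain ⟨ha, ha1, ha2, ha3⟩ := oddComp_cons h1
      have hane : a ≠ 1 := by simpa using h3
      have ha3' : 3 ≤ a := by rcases ha with ⟨k, hk⟩; omega
      rcases Classical.em (a = 3) with rfl | hane3
      · exact Or.inl ⟨δ, ⟨ha3, (chain'_cons_ne_one (by decide)).mp h2⟩, rfl⟩
      · right
        refine ⟨(a - 2) :: δ, ⟨?_, ?_, ?_⟩, ?_⟩
        · rw [oddComp_cons_iff (by rcases ha with ⟨k, hk⟩; exact ⟨k - 1, by omega⟩) (by omega)]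
          have : n - 2 - (a - 2) = n - a := by omega
          rwa [this]
        · rw [chain'_cons_ne_one (by omega)]
          exact (chain'_cons_ne_one hane).mp h2
        · simp; omega
        · simp; omega
  · rintro (⟨δ, ⟨hd1, hd2⟩, rfl⟩ | ⟨δ, ⟨hd1, hd2, hd3⟩, rfl⟩)
    · refine ⟨(oddComp_cons_iff ⟨1, by ring⟩ (by omega)).mpr hd1,
        (chain'_cons_ne_one (by decide)).mpr hd2, by simp⟩
    · cases δ with
      | nil => exact absurd hd1.1 (by simp; omega)
      | cons m ε =>
        obtain ⟨hm, hm1, hm2, hm3⟩ := oddComp_cons hd1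
        have hmne : m ≠ 1 := by simpa using hd3
        have hm3' : 3 ≤ m := by rcases hm with ⟨k, hk⟩; omega
        simp only [List.headI_cons, List.tail_cons]
        refine ⟨?_, ?_, by simp⟩
        · rw [oddComp_cons_iff (by rcases hm with ⟨k, hk⟩; exact ⟨k + 1, by omega⟩) (by omega)]
          have : n - (m + 2) = n - 2 - m := by omega
          rwa [this]
        · rw [chain'_cons_ne_one (by omega)]
          exact (chain'_cons_ne_one hmne).mp hd2

lemma ncard_A (n : ℕ) (hn : 2 ≤ n) :
    (Aset n).ncard = (Sset n).ncard + (Tset (n - 2)).ncard := by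
  have hdisj : Disjoint (Sset n) ((fun δ => 1 :: 1 :: δ) '' Tset (n - 2)) := by
    rw [Set.disjoint_left]
    rintro γ ⟨_, h2⟩ ⟨δ, _, rfl⟩
    exact (List.isChain_cons_cons.mp h2).1 ⟨rfl, rfl⟩
  rw [Aset_eq n hn, Set.ncard_union_eq hdisj (finite_S n) ((finite_T (n - 2)).image _),
    Set.ncard_image_of_injective _ (fun δ₁ δ₂ h => by simpa using h)]

lemma ncard_S (n : ℕ) (hn : 1 ≤ n) :
    (Sset n).ncard = (Tset n).ncard + (Tset (n - 1)).ncard := by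
  have hdisj : Disjoint (Tset n) ((fun δ => 1 :: δ) '' Tset (n - 1)) := by
    rw [Set.disjoint_left]
    rintro γ ⟨_, _, h3⟩ ⟨δ, _, rfl⟩
    exact h3 rfl
  rw [Sset_eq n hn, Set.ncard_union_eq hdisj (finite_T n) ((finite_T (n - 1)).image _),
    Set.ncard_image_of_injective _ (fun δ₁ δ₂ h => by simpa using h)]

lemma ncard_T (n : ℕ) (hn : 3 ≤ n) :
    (Tset n).ncard = (Sset (n - 3)).ncard + (Tset (n - 2)).ncard := by
  have hne : ∀ γ ∈ Tset (n - 2), γ ≠ [] := by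
    rintro γ ⟨h1, _⟩ rfl
    exact absurd h1.1 (by simp; omega)
  have hinj : Set.InjOn (fun γ : List ℕ => (γ.headI + 2) :: γ.tail) (Tset (n - 2)) := by
    intro δ₁ h₁ δ₂ h₂ heq
    cases δ₁ with
    | nil => exact absurd rfl (hne _ h₁)
    | cons m ε =>
      cases δ₂ with
      | nil => exact absurd rfl (hne _ h₂)
      | cons m' ε' =>
        simp only [List.headI_cons, List.tail_cons, List.cons.injEq] at heq
        simp [heq.2]; omega
  have hdisj : Disjoint ((fun δ => 3 :: δ) '' Sset (n - 3))
      ((fun γ : List ℕ => (γ.headI + 2) :: γ.tail) '' Tset (n - 2)) := by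
    rw [Set.disjoint_left]
    rintro γ ⟨δ, _, rfl⟩ ⟨δ', hδ', heq⟩
    cases δ' with
    | nil => exact absurd rfl (hne _ hδ')
    | cons m ε =>
      obtain ⟨hm, _, _, _⟩ := oddComp_cons hδ'.1
      have : m ≠ 1 := by simpa using hδ'.2.2
      have hm3 : 3 ≤ m := by rcases hm with ⟨k, hk⟩; omega
      simp only [List.headI_cons, List.tail_cons, List.cons.injEq] at heq
      omega
  rw [Tset_eq n hn, Set.ncard_union_eq hdisj ((finite_S (n - 3)).image _)
      ((finite_T (n - 2)).image _),
    Set.ncard_image_of_injective _ (fun δ₁ δ₂ h => by simpa using h),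
    Set.ncard_image_of_injOn hinj]

lemma Tset_zero : (Tset 0).ncard = 1 := by
  have : Tset 0 = {[]} := by
    ext γ
    constructor
    · rintro ⟨h1, _⟩; exact oddComp_zero h1
    · rintro rfl
      exact ⟨⟨rfl, by simp⟩, List.isChain_nil, by simp⟩
  rw [this, Set.ncard_singleton]

lemma Sset_zero : (Sset 0).ncard = 1 := by
  have : Sset 0 = {[]} := by
    ext γ
    constructor
    · rintro ⟨h1, _⟩; exact oddComp_zero h1
    · rintro rfl
      exact ⟨⟨rfl, by simp⟩, List.isChain_nil⟩
  rw [this, Set.ncard_singleton]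

lemma Tset_one : (Tset 1).ncard = 0 := by
  have : Tset 1 = ∅ := by
    ext γ
    simp only [Set.mem_empty_iff_false, iff_false]
    rintro ⟨h1, _, h3⟩
    rw [oddComp_one h1] at h3
    exact h3 rfl
  simp [this]

lemma Tset_two : (Tset 2).ncard = 0 := by
  have : Tset 2 = ∅ := by
    ext γ
    simp only [Set.mem_empty_iff_false, iff_false]
    rintro ⟨h1, _, h3⟩
    rw [oddComp_two h1] at h3
    exact h3 rfl
  simp [this]

lemma maxSet_one : (maxSet 1).ncard = 1 := by
  have : maxSet 1 = {[1]} := by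
    rw [maxSet_eq_Aset]
    ext γ
    constructor
    · rintro ⟨h1, _⟩; exact oddComp_one h1
    · rintro rfl
      exact ⟨⟨rfl, by simp⟩, List.isChain_nil⟩
  rw [this, Set.ncard_singleton]

lemma Tset_three : (Tset 3).ncard = 1 := by
  rw [ncard_T 3 (by norm_num)]
  norm_num [Sset_zero, Tset_one]

lemma Tset_four : (Tset 4).ncard = 1 := by
  rw [ncard_T 4 (by norm_num)]
  norm_num [ncard_S 1 (by norm_num), Tset_one, Tset_zero, Tset_two]

lemma Tset_five : (Tset 5).ncard = 1 := by
  rw [ncard_T 5 (by norm_num)]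
  norm_num [ncard_S 2 (by norm_num), Tset_one, Tset_two, Tset_three]

lemma quart (m : ℕ) (hm : 4 ≤ m) :
    (Tset m).ncard = ((Tset (m - 3)).ncard + (Tset (m - 4)).ncard) + (Tset (m - 2)).ncard := by
  rw [ncard_T m (by omega), ncard_S (m - 3) (by omega)]
  have h : m - 3 - 1 = m - 4 := by omega
  rw [h]

lemma trec : ∀ n, 3 ≤ n → (Tset n).ncard = (Tset (n - 1)).ncard + (Tset (n - 3)).ncard := by
  intro n
  induction n using Nat.strong_induction_on with
  | _ n ih =>
    intro hn
    by_cases h6 : n < 6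
    · interval_cases n
      · norm_num [Tset_three, Tset_two, Tset_zero]
      · norm_num [Tset_four, Tset_three, Tset_one]
      · norm_num [Tset_five, Tset_four, Tset_two]
    · have h1 := quart n (by omega)
      have h2 := quart (n - 1) (by omega)
      have h3 := ih (n - 2) (by omega) (by omega)
      have e1 : n - 1 - 2 = n - 3 := by omega
      have e2 : n - 1 - 3 = n - 4 := by omega
      have e3 : n - 1 - 4 = n - 5 := by omega
      have e4 : n - 2 - 1 = n - 3 := by omega
      have e5 : n - 2 - 3 = n - 5 := by omega
      rw [e1, e2, e3] at h2
      rw [e4, e5] at h3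
      omega

lemma ncard_maxSet (n : ℕ) (hn : 2 ≤ n) :
    (maxSet n).ncard = (Tset n).ncard + (Tset (n - 1)).ncard + (Tset (n - 2)).ncard := by
  rw [maxSet_eq_Aset, ncard_A n hn, ncard_S n (by omega)]


/-- The number `a_n` of maximal elements of `F_n` satisfies
`a_n = a_{n-1} + a_{n-3}` for `n ≥ 4`, with `a_1 = a_2 = a_3 = 1`. -/
theorem card_maxSet_recurrence :
    (maxSet 1).ncard = 1 ∧ (maxSet 2).ncard = 1 ∧ (maxSet 3).ncard = 1 ∧
    ∀ n : ℕ, 4 ≤ n →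
      (maxSet n).ncard = (maxSet (n - 1)).ncard + (maxSet (n - 3)).ncard := by
  refine ⟨maxSet_one, ?_, ?_, ?_⟩
  · rw [ncard_maxSet 2 (by norm_num)]
    norm_num [Tset_two, Tset_one, Tset_zero]
  · rw [ncard_maxSet 3 (by norm_num)]
    norm_num [Tset_three, Tset_two, Tset_one]
  · intro n hn
    by_cases h5 : n < 5
    · have h4 : n = 4 := by omega
      subst h4
      rw [ncard_maxSet 4 (by norm_num), ncard_maxSet 3 (by norm_num)]
      norm_num [Tset_four, Tset_three, Tset_two, Tset_one, maxSet_one]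
    · have g1 := ncard_maxSet n (by omega)
      have g2 := ncard_maxSet (n - 1) (by omega)
      have g3 := ncard_maxSet (n - 3) (by omega)
      have e1 : n - 1 - 1 = n - 2 := by omega
      have e2 : n - 1 - 2 = n - 3 := by omega
      have e3 : n - 3 - 1 = n - 4 := by omega
      have e4 : n - 3 - 2 = n - 5 := by omega
      rw [e1, e2] at g2
      rw [e3, e4] at g3
      have t1 := trec n (by omega)
      have t2 := trec (n - 1) (by omega)
      have t3 := trec (n - 2) (by omega)
      have e5 : n - 1 - 3 = n - 4 := by omega
      have e6 : n - 2 - 1 = n - 3 := by omega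
      have e7 : n - 2 - 3 = n - 5 := by omega
      rw [e1, e5] at t2
      rw [e6, e7] at t3
      omega
end
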